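/- Let b, c : Fin 2 → ℝ, and let D, E, F : Matrix (Fin 2) (Fin 2) ℝ with D and F symmetric. Suppose that for all η ∈ ℝ and all φs, φr : Fin 2 → ℝ, ⟨b, R(η).mulVec φs⟩ + ⟨c, R(η).mulVec φr⟩ + ⟨R(η).mulVec φs, D.mulVec (R(η).mulVec φs)⟩ + ⟨R(η).mulVec φs, E.mulVec (R(η).mulVec φr)⟩ + ⟨R(η).mulVec φr, F.mulVec (R(η).mulVec φr)⟩ = ⟨b, φs⟩ + ⟨c, φr⟩ + ⟨φs, D.mulVec φs⟩ + ⟨φs, E.mulVec φr⟩ + ⟨φr, F.mulVec φr⟩, where ⟨·,·⟩ is the Euclidean inner product. Then b = 0, c = 0, and each of D, E, F commutes with R(η) for every η ∈ ℝ. -/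
import Mathlib

open Matrix

/-- The 2×2 rotation matrix of angle `η`. -/
noncomputable def R (η : ℝ) : Matrix (Fin 2) (Fin 2) ℝ :=
  !![Real.cos η, -Real.sin η; Real.sin η, Real.cos η]

lemma R_transpose (η : ℝ) :
    (R η)ᵀ = !![Real.cos η, Real.sin η; -Real.sin η, Real.cos η] := by
  ext i j
  fin_cases i <;> fin_cases j <;> simp [R]

lemma R_mul_transpose (η : ℝ) : R η * (R η)ᵀ = 1 := by
  rw [R_transpose, R, Matrix.mul_fin_two, Matrix.one_fin_two]
  ext i j
  fin_cases i <;> fin_cases j <;> simp <;> nlinarith [Real.sin_sq_add_cos_sq η]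

lemma bilin_ext (M N : Matrix (Fin 2) (Fin 2) ℝ)
    (h : ∀ x y, x ⬝ᵥ M.mulVec y = x ⬝ᵥ N.mulVec y) : M = N := by
  ext i j
  have := h (Pi.single i 1) (Pi.single j 1)
  simpa [Matrix.mulVec_single, dotProduct, Pi.single_apply,
    Finset.sum_ite_eq'] using this

lemma conj_eq (M : Matrix (Fin 2) (Fin 2) ℝ) (x y : Fin 2 → ℝ) (η : ℝ) :
    (R η).mulVec x ⬝ᵥ M.mulVec ((R η).mulVec y)
      = x ⬝ᵥ ((R η)ᵀ * M * R η).mulVec y := by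
  conv_rhs => rw [← Matrix.mulVec_mulVec, ← Matrix.mulVec_mulVec,
    Matrix.dotProduct_mulVec, Matrix.vecMul_transpose]

lemma dot_symm (N : Matrix (Fin 2) (Fin 2) ℝ) (hN : N.IsSymm)
    (u v : Fin 2 → ℝ) : u ⬝ᵥ N.mulVec v = v ⬝ᵥ N.mulVec u := by
  conv_lhs => rw [Matrix.dotProduct_mulVec, ← hN.eq, Matrix.vecMul_transpose]
  exact dotProduct_comm _ _

lemma comm_of_conj (M : Matrix (Fin 2) (Fin 2) ℝ) (η : ℝ)
    (h : (R η)ᵀ * M * R η = M) : M * R η = R η * M := by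
  calc M * R η = R η * (R η)ᵀ * (M * R η) := by rw [R_mul_transpose, one_mul]
    _ = R η * ((R η)ᵀ * M * R η) := by simp [Matrix.mul_assoc]
    _ = R η * M := by rw [h]

/-- Rotation invariance of the affine-quadratic induction-motor energy: if the
energy is unchanged when both flux vectors are rotated by the same angle, then
the linear parts vanish and the quadratic-form matrices commute with all
rotations. -/
theorem im_energy_rotation_invariance
    (b c : Fin 2 → ℝ) (D E F : Matrix (Fin 2) (Fin 2) ℝ)
    (hD : D.IsSymm) (hF : F.IsSymm)
    (hinv : ∀ (η : ℝ) (φs φr : Fin 2 → ℝ),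
      b ⬝ᵥ (R η).mulVec φs + c ⬝ᵥ (R η).mulVec φr
        + (R η).mulVec φs ⬝ᵥ D.mulVec ((R η).mulVec φs)
        + (R η).mulVec φs ⬝ᵥ E.mulVec ((R η).mulVec φr)
        + (R η).mulVec φr ⬝ᵥ F.mulVec ((R η).mulVec φr)
      = b ⬝ᵥ φs + c ⬝ᵥ φr + φs ⬝ᵥ D.mulVec φs + φs ⬝ᵥ E.mulVec φr
        + φr ⬝ᵥ F.mulVec φr) :
    b = 0 ∧ c = 0 ∧ (∀ η : ℝ, D * R η = R η * D) ∧
      (∀ η : ℝ, E * R η = R η * E) ∧ (∀ η : ℝ, F * R η = R η * F) := by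
  have hs : ∀ η φs,
      b ⬝ᵥ (R η).mulVec φs + (R η).mulVec φs ⬝ᵥ D.mulVec ((R η).mulVec φs)
        = b ⬝ᵥ φs + φs ⬝ᵥ D.mulVec φs := by
    intro η φs
    have := hinv η φs 0
    simpa using this
  have hr : ∀ η φr,
      c ⬝ᵥ (R η).mulVec φr + (R η).mulVec φr ⬝ᵥ F.mulVec ((R η).mulVec φr)
        = c ⬝ᵥ φr + φr ⬝ᵥ F.mulVec φr := by
    intro η φr
    have := hinv η 0 φr
    simpa using this
  have hm : ∀ η φs φr,
      (R η).mulVec φs ⬝ᵥ E.mulVec ((R η).mulVec φr) = φs ⬝ᵥ E.mulVec φr := by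
    intro η φs φr
    have h1 := hinv η φs φr
    have h2 := hs η φs
    have h3 := hr η φr
    linarith
  have hlin : ∀ η φ, b ⬝ᵥ (R η).mulVec φ = b ⬝ᵥ φ := by
    intro η φ
    have h1 := hs η φ
    have h2 := hs η (-φ)
    simp only [Matrix.mulVec_neg, dotProduct_neg, neg_dotProduct,
      neg_neg] at h2
    linarith
  have hquadD : ∀ η φ,
      (R η).mulVec φ ⬝ᵥ D.mulVec ((R η).mulVec φ) = φ ⬝ᵥ D.mulVec φ := by
    intro η φ
    have h1 := hs η φ
    have h2 := hs η (-φ)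
    simp only [Matrix.mulVec_neg, dotProduct_neg, neg_dotProduct,
      neg_neg] at h2
    linarith
  have hlinc : ∀ η φ, c ⬝ᵥ (R η).mulVec φ = c ⬝ᵥ φ := by
    intro η φ
    have h1 := hr η φ
    have h2 := hr η (-φ)
    simp only [Matrix.mulVec_neg, dotProduct_neg, neg_dotProduct,
      neg_neg] at h2
    linarith
  have hquadF : ∀ η φ,
      (R η).mulVec φ ⬝ᵥ F.mulVec ((R η).mulVec φ) = φ ⬝ᵥ F.mulVec φ := by
    intro η φ
    have h1 := hr η φ
    have h2 := hr η (-φ)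
    simp only [Matrix.mulVec_neg, dotProduct_neg, neg_dotProduct,
      neg_neg] at h2
    linarith
  have hb : b = 0 := by
    have hRpi : (R Real.pi).mulVec b = -b := by
      funext i
      fin_cases i <;>
        simp [R, Matrix.mulVec, dotProduct, Fin.sum_univ_two]
    have h := hlin Real.pi b
    rw [hRpi] at h
    simp only [dotProduct_neg] at h
    have hb2 : b ⬝ᵥ b = 0 := by linarith
    exact dotProduct_self_eq_zero.mp hb2
  have hc : c = 0 := by
    have hRpi : (R Real.pi).mulVec c = -c := by
      funext i
      fin_cases i <;>
        simp [R, Matrix.mulVec, dotProduct, Fin.sum_univ_two]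
    have h := hlinc Real.pi c
    rw [hRpi] at h
    simp only [dotProduct_neg] at h
    have hc2 : c ⬝ᵥ c = 0 := by linarith
    exact dotProduct_self_eq_zero.mp hc2
  have symm_conj : ∀ (M : Matrix (Fin 2) (Fin 2) ℝ), M.IsSymm →
      (∀ η φ, (R η).mulVec φ ⬝ᵥ M.mulVec ((R η).mulVec φ) = φ ⬝ᵥ M.mulVec φ) →
      ∀ η, M * R η = R η * M := by
    intro M hM hq η
    apply comm_of_conj
    apply bilin_ext
    intro x y
    have hconj : ((R η)ᵀ * M * R η).IsSymm := by
      unfold Matrix.IsSymm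
      rw [Matrix.transpose_mul, Matrix.transpose_mul, Matrix.transpose_transpose,
        hM.eq, Matrix.mul_assoc]
    have key : ∀ u : Fin 2 → ℝ,
        u ⬝ᵥ ((R η)ᵀ * M * R η).mulVec u = u ⬝ᵥ M.mulVec u := by
      intro u
      rw [← conj_eq]
      exact hq η u
    have h1 := key (x + y)
    have h2 := key x
    have h3 := key y
    have e1 := dot_symm _ hconj x y
    have e2 := dot_symm _ hM x y
    simp only [Matrix.mulVec_add, add_dotProduct, dotProduct_add] at h1
    linarith
  refine ⟨hb, hc, symm_conj D hD hquadD, ?_, symm_conj F hF hquadF⟩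
  intro η
  apply comm_of_conj
  apply bilin_ext
  intro x y
  rw [← conj_eq]
  exact hm η x y
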